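/- Let K be a field, let k ≥ 1 and n, m, l ≥ 0 be natural numbers, and let u, v (each indexed 0,…,n), w, x (each indexed 0,…,m), and y, z (each indexed 0,…,l) be families of elements of K. Then the (2(n+k)+2(m+k)+2(l+k)) × k block matrix g whose vertical blocks are T(u), T(v), T(w), T(x), T(y), T(z) in that order has rank k if and only if not all of the elements of u, v, w, x, y, z are zero (and g = 0 when they are all zero). -/

import Mathlib

/-- The tall Toeplitz band matrix `T(u)`: the `(n+k) × k` matrix with
`T(u)[j,i] = u (j-i)` when `i ≤ j ≤ i + n` and `0` otherwise. -/
def Tt {K : Type*} [Field K] (k n : ℕ) (u : Fin (n + 1) → K) :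
    Matrix (Fin (n + k)) (Fin k) K :=
  Matrix.of fun j i =>
    if h : (i : ℕ) ≤ (j : ℕ) ∧ (j : ℕ) ≤ (i : ℕ) + n then
      u ⟨(j : ℕ) - (i : ℕ), by omega⟩
    else 0


/-- If `u ≠ 0` and `c ≠ 0`, the Toeplitz band matrix applied to `c` is nonzero. -/
lemma Tt_mulVec_ne_zero {K : Type*} [Field K] {k n : ℕ} {u : Fin (n + 1) → K}
    (hu : u ≠ 0) {c : Fin k → K} (hc : c ≠ 0) : (Tt k n u).mulVec c ≠ 0 := by
  classical
  have hu' : ∃ b, ∃ hb : b < n + 1, u ⟨b, hb⟩ ≠ 0 := by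
    obtain ⟨a, ha⟩ := Function.ne_iff.mp hu
    exact ⟨a, a.isLt, by simpa using ha⟩
  have hc' : ∃ i, ∃ hi : i < k, c ⟨i, hi⟩ ≠ 0 := by
    obtain ⟨a, ha⟩ := Function.ne_iff.mp hc
    exact ⟨a, a.isLt, by simpa using ha⟩
  set A := Nat.find hu' with hAdef
  obtain ⟨hA, hAne⟩ := Nat.find_spec hu'
  have hAmin : ∀ b, b < A → ∀ hb : b < n + 1, u ⟨b, hb⟩ = 0 := by
    intro b hb hb'
    by_contra h
    have : A ≤ b := Nat.find_le ⟨hb', h⟩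
    omega
  set I := Nat.find hc' with hIdef
  obtain ⟨hI, hIne⟩ := Nat.find_spec hc'
  have hImin : ∀ b, b < I → ∀ hb : b < k, c ⟨b, hb⟩ = 0 := by
    intro b hb hb'
    by_contra h
    have : I ≤ b := Nat.find_le ⟨hb', h⟩
    omega
  intro hz
  have hj : I + A < n + k := by omega
  have := congrFun hz ⟨I + A, hj⟩
  rw [Matrix.mulVec, dotProduct] at this
  rw [Finset.sum_eq_single ⟨I, hI⟩] at this
  · have hcond : (I : ℕ) ≤ I + A ∧ I + A ≤ I + n := ⟨by omega, by omega⟩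
    rw [show (Tt k n u) ⟨I + A, hj⟩ ⟨I, hI⟩ = u ⟨A, hA⟩ by
      simp only [Tt, Matrix.of_apply]
      rw [dif_pos hcond]
      congr 1
      exact Fin.ext (by simp)] at this
    exact hAne ((mul_eq_zero.mp this).resolve_right hIne)
  · intro i' _ hne
    rcases lt_trichotomy (i' : ℕ) I with h | h | h
    · rw [hImin i' h i'.isLt]; simp
    · exact absurd (Fin.ext h) hne
    · simp only [Tt, Matrix.of_apply]
      split
      · rename_i hcond
        rw [hAmin (I + A - i') (by omega) (by omega)]
        simp
      · simp
  · simp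

lemma Tt_rank_helper {K : Type*} [Field K] {k n : ℕ} {u : Fin (n + 1) → K}
    (hu : u ≠ 0) {c : Fin k → K} (hz : (Tt k n u).mulVec c = 0) : c = 0 := by
  by_contra hc
  exact Tt_mulVec_ne_zero hu hc hz

lemma fromRows_mulVec_zero {K : Type*} [Field K] {m₁ m₂ n : Type*} [Fintype n]
    {A : Matrix m₁ n K} {B : Matrix m₂ n K} {c : n → K}
    (h : (Matrix.fromRows A B).mulVec c = 0) : A.mulVec c = 0 ∧ B.mulVec c = 0 := by
  rw [Matrix.fromRows_mulVec] at h
  exact ⟨funext fun j => congrFun h (Sum.inl j), funext fun j => congrFun h (Sum.inr j)⟩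

lemma Tt_zero {K : Type*} [Field K] (k n : ℕ) : Tt k n (0 : Fin (n + 1) → K) = 0 := by
  ext j i
  simp only [Tt, Matrix.of_apply, Pi.zero_apply, Matrix.zero_apply]
  split <;> rfl

/-- The block matrix `g = [T(u); T(v); T(w); T(x); T(y); T(z)]` has rank `k`
if and only if not all of `u, v, w, x, y, z` vanish; and `g = 0` when they all
vanish. -/
theorem stmt9 {K : Type*} [Field K] (k n m l : ℕ) (hk : 1 ≤ k)
    (u v : Fin (n + 1) → K) (w x : Fin (m + 1) → K) (y z : Fin (l + 1) → K) :
    ((Matrix.fromRows (Matrix.fromRows (Tt k n u) (Tt k n v))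
          (Matrix.fromRows (Matrix.fromRows (Tt k m w) (Tt k m x))
            (Matrix.fromRows (Tt k l y) (Tt k l z)))).rank = k ↔
        ¬(u = 0 ∧ v = 0 ∧ w = 0 ∧ x = 0 ∧ y = 0 ∧ z = 0)) ∧
      (u = 0 ∧ v = 0 ∧ w = 0 ∧ x = 0 ∧ y = 0 ∧ z = 0 →
        Matrix.fromRows (Matrix.fromRows (Tt k n u) (Tt k n v))
          (Matrix.fromRows (Matrix.fromRows (Tt k m w) (Tt k m x))
            (Matrix.fromRows (Tt k l y) (Tt k l z))) = 0) := by
  have hzero : (u = 0 ∧ v = 0 ∧ w = 0 ∧ x = 0 ∧ y = 0 ∧ z = 0) →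
      Matrix.fromRows (Matrix.fromRows (Tt k n u) (Tt k n v))
        (Matrix.fromRows (Matrix.fromRows (Tt k m w) (Tt k m x))
          (Matrix.fromRows (Tt k l y) (Tt k l z))) = 0 := by
    rintro ⟨hu, hv, hw, hx, hy, hz⟩
    subst hu hv hw hx hy hz
    simp only [Tt_zero]
    ext (j | (j | j)) i <;> rcases j with j | j <;> rfl
  refine ⟨⟨fun hr hall => ?_, fun hall => ?_⟩, hzero⟩
  · rw [hzero hall, Matrix.rank_zero] at hr
    omega
  · -- some family is nonzero
    have h6 : u ≠ 0 ∨ v ≠ 0 ∨ w ≠ 0 ∨ x ≠ 0 ∨ y ≠ 0 ∨ z ≠ 0 := by tauto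
    set g := Matrix.fromRows (Matrix.fromRows (Tt k n u) (Tt k n v))
        (Matrix.fromRows (Matrix.fromRows (Tt k m w) (Tt k m x))
          (Matrix.fromRows (Tt k l y) (Tt k l z))) with hg
    have hker : ∀ c : Fin k → K, g.mulVec c = 0 → c = 0 := by
      intro c hc
      obtain ⟨h1, h2⟩ := fromRows_mulVec_zero hc
      obtain ⟨hu', hv'⟩ := fromRows_mulVec_zero h1
      obtain ⟨h3, h4⟩ := fromRows_mulVec_zero h2
      obtain ⟨hw', hx'⟩ := fromRows_mulVec_zero h3
      obtain ⟨hy', hz'⟩ := fromRows_mulVec_zero h4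
      rcases h6 with h | h | h | h | h | h
      exacts [Tt_rank_helper h hu', Tt_rank_helper h hv', Tt_rank_helper h hw',
        Tt_rank_helper h hx', Tt_rank_helper h hy', Tt_rank_helper h hz']
    have hinj : Function.Injective g.mulVecLin := by
      rw [← LinearMap.ker_eq_bot, LinearMap.ker_eq_bot']
      intro c hc
      exact hker c (by simpa using hc)
    rw [Matrix.rank, LinearMap.finrank_range_of_inj hinj]
    simp
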